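/- Under the two-groups model, let R = R(p_1,…,p_m) ∈ {0,1,…,m} be a measurable rejection-count rule rejecting the R hypotheses with the smallest p-values, and let the procedure 𝓡^(−1) reject the max(R−1, 0) hypotheses with the smallest p-values. Then E[L_λ(H, 𝓡) − L_λ(H, 𝓡^(−1))] = ((1+λ)/m)·(P{H_(R) = 0, R > 0} − α·P{R > 0}), where H_(R) is the hypothesis indicator paired with the largest rejected p-value. -/

import Mathlib

open MeasureTheory ProbabilityTheory Filter

noncomputable section

/-- The uniform distribution on `[0,1]` (the null `p`-value distribution). -/
def uniform01 : Measure ℝ := volume.restrict (Set.Icc 0 1)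

/-- `orderStat m p k` is the `k`-th order statistic `p_(k)` of `p_1, …, p_m` (1-indexed),
with the conventions `p_(0) = 0` and `p_(k) = 0` for `k > m`. -/
def orderStat (m : ℕ) (p : Fin m → ℝ) (k : ℕ) : ℝ :=
  if h : 1 ≤ k ∧ k ≤ m then p (Tuple.sort p ⟨k - 1, by omega⟩) else 0

/-- The SL rejection count at level `q`: the largest minimizer over `k ∈ {0, …, m}`
of `p_(k) - q k / m`. -/
def slCount (m : ℕ) (q : ℝ) (p : Fin m → ℝ) : ℕ :=
  sSup {k | k ≤ m ∧ ∀ j ≤ m,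
    orderStat m p k - q * k / m ≤ orderStat m p j - q * j / m}

/-- The SL rejection threshold `τ_q = p_(R_q)`. -/
def slThreshold (m : ℕ) (q : ℝ) (p : Fin m → ℝ) : ℝ :=
  orderStat m p (slCount m q p)

/-- The empirical cdf `F_m` of `p_1, …, p_m`. -/
def ecdf (m : ℕ) (p : Fin m → ℝ) (t : ℝ) : ℝ :=
  ((Finset.univ.filter fun i => p i ≤ t).card : ℝ) / m

/-- The alternative `p`-value distribution, with density `f1` on `[0,1]`. -/
def altMeasure (f1 : ℝ → ℝ) : Measure ℝ :=
  uniform01.withDensity fun t => ENNReal.ofReal (f1 t)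

/-- The two-groups distribution of a pair `(H_i, p_i)`: `H_i ~ Bernoulli(1 - π0)`
(`false` meaning the null holds), `p_i | H_i = false ~ Unif[0,1]`, and
`p_i | H_i = true` has density `f1`. -/
def pairMeasure (π0 : ℝ) (f1 : ℝ → ℝ) : Measure (Bool × ℝ) :=
  ENNReal.ofReal π0 • (Measure.dirac false).prod uniform01
    + ENNReal.ofReal (1 - π0) • (Measure.dirac true).prod (altMeasure f1)

/-- The joint distribution of the i.i.d. pairs `(H_i, p_i)`, `i = 1, …, m`. -/
def jointMeasure (m : ℕ) (π0 : ℝ) (f1 : ℝ → ℝ) : Measure (Fin m → Bool × ℝ) :=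
  Measure.pi fun _ => pairMeasure π0 f1

/-- The `p`-values of an outcome of the two-groups model. -/
def pvals (m : ℕ) (x : Fin m → Bool × ℝ) (i : Fin m) : ℝ := (x i).2

/-- The marginal `p`-value mixture density `f = π0 + (1 - π0) f1`. -/
def mixDensity (π0 : ℝ) (f1 : ℝ → ℝ) (t : ℝ) : ℝ := π0 + (1 - π0) * f1 t

/-- The local false discovery rate `lfdr(t) = π0 / f(t)`. -/
def lfdr (π0 : ℝ) (f1 : ℝ → ℝ) (t : ℝ) : ℝ := π0 / mixDensity π0 f1 t

/-- The event that, rejecting the `R` hypotheses with the smallest `p`-values,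
the last rejection is a false discovery: `R > 0` and `H_(R) = 0`, where `H_(R)` is the
hypothesis indicator paired with the `R`-th smallest `p`-value. -/
def lastRejNull (m : ℕ) (R : ℕ) (x : Fin m → Bool × ℝ) : Prop :=
  ∃ h : 1 ≤ R ∧ R ≤ m,
    (x (Tuple.sort (pvals m x) ⟨R - 1, by omega⟩)).1 = false

/-- The maximum of `g` over a finite set `S`, with the convention that the
maximum over the empty set is `0`. -/
def maxOver {ι : Type*} (S : Finset ι) (g : ι → ℝ) : ℝ :=
  if h : S.Nonempty then S.sup' h g else 0

/-- The SL rejection set `𝓡_q = {i : p_i ≤ τ_q}`. -/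
def rejSet (m : ℕ) (q : ℝ) (p : Fin m → ℝ) : Finset (Fin m) :=
  Finset.univ.filter fun i => p i ≤ slThreshold m q p

/-- The weighted classification loss `L_λ(H, 𝓡) = ((1+λ)V - R)/m` incurred when the `r`
hypotheses with the smallest `p`-values are rejected: `V` is the number of rejected
nulls among the first `r` sorted positions. -/
def rejLoss (m : ℕ) (lam : ℝ) (r : ℕ) (x : Fin m → Bool × ℝ) : ℝ :=
  ((1 + lam) * ((Finset.univ.filter fun j : Fin m =>
        (j : ℕ) < r ∧ (x (Tuple.sort (pvals m x) j)).1 = false).card : ℝ)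
      - (r : ℝ)) / m

/-- Under the two-groups model, for a measurable rejection-count rule
`R = R(p_1, …, p_m) ∈ {0, …, m}` rejecting the `R` smallest `p`-values, and `𝓡^(−1)`
rejecting the `max(R-1, 0)` smallest, we have
`E[L_λ(H,𝓡) - L_λ(H,𝓡^(−1))] = ((1+λ)/m)·(P{H_(R) = 0, R > 0} - α·P{R > 0})`. -/

lemma sortSet_meas (m : ℕ) (σ : Equiv.Perm (Fin m)) :
    MeasurableSet {p : Fin m → ℝ | Tuple.sort p = σ} := by
  have : {p : Fin m → ℝ | Tuple.sort p = σ} =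
      (⋂ i, ⋂ j, ⋂ (_ : i ≤ j), {p : Fin m → ℝ | p (σ i) ≤ p (σ j)}) ∩
      (⋂ i, ⋂ j, ⋂ (_ : i < j) (_ : ¬ σ i < σ j), {p : Fin m → ℝ | ¬ p (σ i) = p (σ j)}) := by
    ext p
    simp only [Set.mem_setOf_eq, Set.mem_inter_iff, Set.mem_iInter, eq_comm (a := Tuple.sort p),
      Tuple.eq_sort_iff]
    constructor
    · rintro ⟨h1, h2⟩
      exact ⟨fun i j hij => h1 hij, fun i j hij hns heq => hns (h2 i j hij heq)⟩
    · rintro ⟨h1, h2⟩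
      refine ⟨fun i j hij => h1 i j hij, fun i j hij heq => ?_⟩
      by_contra hns
      exact h2 i j hij hns heq
  rw [this]
  apply MeasurableSet.inter
  · exact MeasurableSet.iInter fun i => MeasurableSet.iInter fun j =>
      MeasurableSet.iInter fun _ =>
        measurableSet_le (measurable_pi_apply _) (measurable_pi_apply _)
  · exact MeasurableSet.iInter fun i => MeasurableSet.iInter fun j =>
      MeasurableSet.iInter fun _ => MeasurableSet.iInter fun _ => by
          have := (_root_.measurableSet_eq_fun
            (f := fun p : Fin m → ℝ => p (σ i)) (g := fun p : Fin m → ℝ => p (σ j))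
            (measurable_pi_apply _) (measurable_pi_apply _)).compl
          simpa [Set.compl_setOf] using this

open scoped Classical in
lemma rejLoss_diff (m : ℕ) (hm : 0 < m) (lam : ℝ) (x : Fin m → Bool × ℝ) (r : ℕ) (hr : r ≤ m) :
    rejLoss m lam r x - rejLoss m lam (r - 1) x
      = ((1 + lam) / m) * (if lastRejNull m r x then 1 else 0)
        - (1 / m) * (if 0 < r then 1 else 0) := by
  classical
  match r, hr with
  | 0, _ => simp [lastRejNull]
  | (r' + 1), hr =>
    have hr' : r' < m := by omega
    set σ := Tuple.sort (pvals m x) with hσ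
    have hcard : (Finset.univ.filter fun j : Fin m =>
          (j : ℕ) < r' + 1 ∧ (x (σ j)).1 = false).card
        = (Finset.univ.filter fun j : Fin m =>
            (j : ℕ) < r' ∧ (x (σ j)).1 = false).card
          + (if (x (σ ⟨r', hr'⟩)).1 = false then 1 else 0) := by
      have hsplit : (Finset.univ.filter fun j : Fin m =>
            (j : ℕ) < r' + 1 ∧ (x (σ j)).1 = false)
          = (Finset.univ.filter fun j : Fin m => (j : ℕ) < r' ∧ (x (σ j)).1 = false)
            ∪ (Finset.univ.filter fun j : Fin m => (j : ℕ) = r' ∧ (x (σ j)).1 = false) := by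
        ext j
        simp only [Finset.mem_filter, Finset.mem_union, Finset.mem_univ, true_and]
        constructor
        · rintro ⟨h1, h2⟩
          rcases Nat.lt_succ_iff_lt_or_eq.1 h1 with h | h
          · exact Or.inl ⟨h, h2⟩
          · exact Or.inr ⟨h, h2⟩
        · rintro (⟨h1, h2⟩ | ⟨h1, h2⟩) <;> exact ⟨by omega, h2⟩
      have hdisj : Disjoint
          (Finset.univ.filter fun j : Fin m => (j : ℕ) < r' ∧ (x (σ j)).1 = false)
          (Finset.univ.filter fun j : Fin m => (j : ℕ) = r' ∧ (x (σ j)).1 = false) := by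
        rw [Finset.disjoint_left]
        intro j hj1 hj2
        simp only [Finset.mem_filter] at hj1 hj2
        omega
      rw [hsplit, Finset.card_union_of_disjoint hdisj]
      congr 1
      by_cases hb : (x (σ ⟨r', hr'⟩)).1 = false
      · rw [if_pos hb]
        rw [show (Finset.univ.filter fun j : Fin m => (j : ℕ) = r' ∧ (x (σ j)).1 = false)
            = {⟨r', hr'⟩} from ?_]
        · exact Finset.card_singleton _
        · ext j
          simp only [Finset.mem_filter, Finset.mem_univ, true_and, Finset.mem_singleton]
          constructor
          · rintro ⟨h1, _⟩; exact Fin.ext h1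
          · rintro rfl; exact ⟨rfl, hb⟩
      · rw [if_neg hb, Finset.card_eq_zero, Finset.filter_eq_empty_iff]
        rintro j - ⟨h1, h2⟩
        exact hb (by rwa [show (⟨r', hr'⟩ : Fin m) = j from (Fin.ext h1).symm])
    have hlrn : lastRejNull m (r' + 1) x ↔ (x (σ ⟨r', hr'⟩)).1 = false := by
      constructor
      · rintro ⟨h, hb⟩; exact hb
      · intro hb; exact ⟨⟨Nat.succ_le_succ (Nat.zero_le _), hr⟩, hb⟩
    have hmne : (m : ℝ) ≠ 0 := Nat.cast_ne_zero.2 hm.ne'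
    unfold rejLoss
    rw [← hσ, show r' + 1 - 1 = r' from rfl, hcard]
    rw [if_pos (Nat.succ_pos r')]
    by_cases hb : (x (σ ⟨r', hr'⟩)).1 = false
    · rw [if_pos hb, if_pos (hlrn.2 hb)]
      push_cast
      field_simp
      ring
    · rw [if_neg hb, if_neg (fun h => hb (hlrn.1 h))]
      push_cast
      field_simp
      ring


theorem stmt8 (m : ℕ) (hm : 0 < m) (π0 : ℝ) (hπ0 : 0 ≤ π0) (hπ1 : π0 ≤ 1)
    (f1 : ℝ → ℝ) (hf1m : Measurable f1) (hf1nn : ∀ t, 0 ≤ f1 t)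
    (hf1int : ∫ t in Set.Icc (0:ℝ) 1, f1 t = 1)
    (lam α : ℝ) (hlam : 0 < lam) (hα : α = 1 / (1 + lam))
    (R : (Fin m → ℝ) → ℕ) (hRmeas : Measurable R) (hRle : ∀ p, R p ≤ m) :
    ∫ x, (rejLoss m lam (R (pvals m x)) x - rejLoss m lam (R (pvals m x) - 1) x)
        ∂ jointMeasure m π0 f1
      = ((1 + lam) / m) *
          ((jointMeasure m π0 f1 {x | lastRejNull m (R (pvals m x)) x}).toReal
            - α * (jointMeasure m π0 f1 {x | 0 < R (pvals m x)}).toReal) := by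
  classical
  have hmne : (m : ℝ) ≠ 0 := Nat.cast_ne_zero.2 hm.ne'
  have hlamne : (1 : ℝ) + lam ≠ 0 := by linarith
  have huni : uniform01 Set.univ = 1 := by
    simp [uniform01, Real.volume_Icc]
  haveI : IsFiniteMeasure uniform01 := ⟨by rw [huni]; exact ENNReal.one_lt_top⟩
  have hIntf1 : IntegrableOn f1 (Set.Icc (0:ℝ) 1) volume := by
    by_contra h
    rw [MeasureTheory.integral_undef h] at hf1int
    norm_num at hf1int
  have hIntf1' : Integrable f1 uniform01 := hIntf1
  have halt : altMeasure f1 Set.univ = 1 := by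
    rw [altMeasure, withDensity_apply _ MeasurableSet.univ, Measure.restrict_univ,
      ← ofReal_integral_eq_lintegral_ofReal hIntf1' (Filter.Eventually.of_forall hf1nn),
      show (∫ a, f1 a ∂uniform01) = 1 from hf1int]
    simp
  haveI : IsFiniteMeasure (altMeasure f1) := ⟨by rw [halt]; exact ENNReal.one_lt_top⟩
  haveI hpair : IsProbabilityMeasure (pairMeasure π0 f1) := by
    constructor
    rw [pairMeasure, Measure.add_apply, Measure.smul_apply, Measure.smul_apply,
      ← Set.univ_prod_univ, Measure.prod_prod, Measure.prod_prod]
    simp only [measure_univ, huni, halt, mul_one, smul_eq_mul]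
    rw [← ENNReal.ofReal_add hπ0 (by linarith)]
    norm_num
  haveI : IsProbabilityMeasure (jointMeasure m π0 f1) := by
    unfold jointMeasure; infer_instance
  have hpm : Measurable (pvals m) :=
    measurable_pi_lambda _ fun i => measurable_snd.comp (measurable_pi_apply i)
  set S := {x | lastRejNull m (R (pvals m x)) x} with hSdef
  set T := {x : Fin m → Bool × ℝ | 0 < R (pvals m x)} with hTdef
  have hTm : MeasurableSet T := by
    have : T = pvals m ⁻¹' (R ⁻¹' ({0}ᶜ)) := by
      ext x; simp [hTdef, Nat.pos_iff_ne_zero]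
    rw [this]; exact hpm (hRmeas (measurableSet_singleton 0).compl)
  have hSm : MeasurableSet S := by
    have hS : S = ⋃ (σ : Equiv.Perm (Fin m)), ⋃ (r : ℕ), ⋃ (h : 1 ≤ r ∧ r ≤ m),
        ((pvals m ⁻¹' ({p | R p = r} ∩ {p | Tuple.sort p = σ})) ∩
          {x | (x (σ ⟨r - 1, by omega⟩)).1 = false}) := by
      ext x
      simp only [hSdef, Set.mem_iUnion, Set.mem_inter_iff, Set.mem_preimage, Set.mem_setOf_eq]
      constructor
      · rintro ⟨h, hb⟩
        exact ⟨Tuple.sort (pvals m x), R (pvals m x), h, ⟨rfl, rfl⟩, hb⟩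
      · rintro ⟨σ, r, hrr, ⟨hR, hsort⟩, hb⟩
        subst hR
        refine ⟨hrr, ?_⟩
        rw [hsort]
        exact hb
    rw [hS]
    refine MeasurableSet.iUnion fun σ => MeasurableSet.iUnion fun r =>
      MeasurableSet.iUnion fun hrr => ?_
    refine (hpm ((hRmeas (measurableSet_singleton r)).inter (sortSet_meas m σ))).inter ?_
    exact (measurable_fst.comp (measurable_pi_apply _)) (measurableSet_singleton false)
  have hfun : (fun x => rejLoss m lam (R (pvals m x)) x
        - rejLoss m lam (R (pvals m x) - 1) x)
      = fun x => ((1 + lam) / m) * Set.indicator S 1 x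
          - (1 / m) * Set.indicator T 1 x := by
    funext x
    rw [rejLoss_diff m hm lam x _ (hRle _)]
    simp only [Set.indicator_apply, Pi.one_apply, hSdef, hTdef, Set.mem_setOf_eq]
  have hint1 : Integrable (fun x => (1 + lam) / (m:ℝ) * Set.indicator S 1 x)
      (jointMeasure m π0 f1) := ((integrable_const (1:ℝ)).indicator hSm).const_mul _
  have hint2 : Integrable (fun x => 1 / (m:ℝ) * Set.indicator T 1 x)
      (jointMeasure m π0 f1) := ((integrable_const (1:ℝ)).indicator hTm).const_mul _
  rw [hfun, integral_sub hint1 hint2,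
    integral_const_mul, integral_const_mul, integral_indicator_one hSm,
    integral_indicator_one hTm, hα]
  field_simp
  simp only [measureReal_def]
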